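/- arXiv:2005.03146 — 2 statements merged into one kernel-verified Lean document; each statement's English description precedes it below -/
import Mathlib

section
/- For every integer m ≥ 1, the complete graph K_{3m} satisfies ‖M_{K_{3m}}‖_2 := sup{ ‖M_{K_{3m}} f‖_2 / ‖f‖_2 : f ≠ 0 } = (4/3)^{1/2}. For n = 2, one has ‖M_{K_2}‖_2 = (3 + 5^{1/2})^{1/2} / 2. -/
open scoped Classical

/-- The ball of radius `r` around `e` in the graph metric of `G`
(only vertices reachable from `e` are at finite distance). -/
noncomputable def gball {V : Type*} [Fintype V] (G : SimpleGraph V) (e : V) (r : ℕ) :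
    Finset V :=
  Finset.univ.filter fun m => G.Reachable e m ∧ G.dist e m ≤ r

/-- The centered Hardy–Littlewood maximal function on a finite graph. -/
noncomputable def mxHL {V : Type*} [Fintype V] (G : SimpleGraph V) (f : V → ℝ) (e : V) : ℝ :=
  ⨆ r : ℕ, (1 / ((gball G e r).card : ℝ)) * ∑ m ∈ gball G e r, |f m|

/-- The fractional centered Hardy–Littlewood maximal function on a finite graph. -/
noncomputable def mxFr {V : Type*} [Fintype V] (G : SimpleGraph V) (α : ℝ) (f : V → ℝ)
    (e : V) : ℝ :=
  ⨆ r : ℕ, ((gball G e r).card : ℝ) ^ (α - 1) * ∑ m ∈ gball G e r, |f m|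

/-- The `p`-variation of `f : V → ℝ` with respect to the graph `G`
(vertices at distance `1` are exactly the adjacent ones). -/
noncomputable def vp {V : Type*} [Fintype V] (G : SimpleGraph V) (p : ℝ) (f : V → ℝ) : ℝ :=
  ((1 / 2) * ∑ v : V, ∑ w : V, if G.Adj v w then |f v - f w| ^ p else 0) ^ (1 / p)

/-- The star graph on `Fin n`, with center the vertex with value `0`. -/
def starG (n : ℕ) : SimpleGraph (Fin n) where
  Adj v w := v ≠ w ∧ (v.val = 0 ∨ w.val = 0)
  symm := ⟨fun _ _ h => ⟨h.1.symm, h.2.symm⟩⟩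
  loopless := ⟨fun _ h => h.1 rfl⟩

/-- The `ℓ²` norm of a function on a finite vertex set. -/
noncomputable def nrm2 {V : Type*} [Fintype V] (g : V → ℝ) : ℝ :=
  Real.sqrt (∑ v : V, g v ^ 2)

/-! ### Auxiliary lemmas -/

lemma gball_top_zero {n : ℕ} (e : Fin n) :
    gball (⊤ : SimpleGraph (Fin n)) e 0 = {e} := by
  ext m
  simp only [gball, Finset.mem_filter, Finset.mem_univ, true_and, Finset.mem_singleton,
    Nat.le_zero]
  constructor
  · rintro ⟨hr, hd⟩
    rcases SimpleGraph.dist_eq_zero_iff_eq_or_not_reachable.mp hd with h | h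
    · exact h.symm
    · exact absurd hr h
  · rintro rfl
    exact ⟨SimpleGraph.Reachable.refl m, by simp [SimpleGraph.dist_self]⟩

lemma gball_top_pos {n : ℕ} (e : Fin n) (r : ℕ) (hr : 1 ≤ r) :
    gball (⊤ : SimpleGraph (Fin n)) e r = Finset.univ := by
  ext m
  simp only [gball, Finset.mem_filter, Finset.mem_univ, true_and, iff_true]
  by_cases h : e = m
  · subst h; exact ⟨SimpleGraph.Reachable.refl e, by simp [SimpleGraph.dist_self]⟩
  · have hadj : (⊤ : SimpleGraph (Fin n)).Adj e m := by simpa using h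
    exact ⟨hadj.reachable,
      le_trans (le_of_eq (SimpleGraph.dist_eq_one_iff_adj.mpr hadj)) hr⟩

lemma mxHL_top {n : ℕ} (f : Fin n → ℝ) (e : Fin n) :
    mxHL (⊤ : SimpleGraph (Fin n)) f e = max |f e| ((∑ m, |f m|) / n) := by
  have hF0 : (1 / ((gball (⊤ : SimpleGraph (Fin n)) e 0).card : ℝ)) *
      ∑ m ∈ gball (⊤ : SimpleGraph (Fin n)) e 0, |f m| = |f e| := by
    rw [gball_top_zero]; simp
  have hFs : ∀ r : ℕ, (1 / ((gball (⊤ : SimpleGraph (Fin n)) e (r+1)).card : ℝ)) *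
      ∑ m ∈ gball (⊤ : SimpleGraph (Fin n)) e (r+1), |f m| = (∑ m, |f m|) / n := by
    intro r
    rw [gball_top_pos e (r+1) (by omega), Finset.card_univ, Fintype.card_fin, one_div,
      inv_mul_eq_div]
  have hub : ∀ r : ℕ, (1 / ((gball (⊤ : SimpleGraph (Fin n)) e r).card : ℝ)) *
      ∑ m ∈ gball (⊤ : SimpleGraph (Fin n)) e r, |f m| ≤ max |f e| ((∑ m, |f m|) / n) := by
    intro r
    cases r with
    | zero => rw [hF0]; exact le_max_left _ _
    | succ r => rw [hFs r]; exact le_max_right _ _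
  have hbdd : BddAbove (Set.range fun r : ℕ =>
      (1 / ((gball (⊤ : SimpleGraph (Fin n)) e r).card : ℝ)) *
      ∑ m ∈ gball (⊤ : SimpleGraph (Fin n)) e r, |f m|) := by
    refine ⟨max |f e| ((∑ m, |f m|) / n), ?_⟩
    rintro x ⟨r, rfl⟩
    exact hub r
  apply le_antisymm
  · exact ciSup_le hub
  · apply max_le
    · rw [← hF0]; exact le_ciSup hbdd 0
    · rw [← hFs 0]; exact le_ciSup hbdd 1

lemma key_alg (k m a b s1 s2 : ℝ) (hk : 0 ≤ k) (hm : 0 ≤ m) (ha : 0 ≤ a) (hb : 0 ≤ b)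
    (hs1 : 0 ≤ s1) (hs2 : 0 ≤ s2) (h1 : s1^2 ≤ k*a) (h2 : s2^2 ≤ m*b) :
    a*(k+m)^2 + m*(s1+s2)^2 ≤ (4/3)*(a+b)*(k+m)^2 := by
  have hCa0 : 0 ≤ (k+m)^2/3 - m*k := by nlinarith [sq_nonneg (k-m)]
  have hCb0 : 0 ≤ 4*(k+m)^2/3 - m^2 := by nlinarith [sq_nonneg k, mul_nonneg hk hm]
  have hkm3 : k*m^3 ≤ ((k+m)^2/3 - m*k) * (4*(k+m)^2/3 - m^2) := by
    nlinarith [sq_nonneg ((2*k-m)*(k+m))]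
  have hX2 : (m*s1*s2)^2 ≤ (((k+m)^2/3 - m*k)*a) * ((4*(k+m)^2/3 - m^2)*b) := by
    have e2 : s1^2*s2^2 ≤ (k*a)*(m*b) :=
      mul_le_mul h1 h2 (sq_nonneg _) (mul_nonneg hk ha)
    have e3 : m^2*(s1^2*s2^2) ≤ m^2*((k*a)*(m*b)) :=
      mul_le_mul_of_nonneg_left e2 (sq_nonneg m)
    have e5 : (k*m^3)*(a*b) ≤ (((k+m)^2/3 - m*k) * (4*(k+m)^2/3 - m^2))*(a*b) :=
      mul_le_mul_of_nonneg_right hkm3 (mul_nonneg ha hb)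
    nlinarith [e3, e5]
  have hcross : 2*(m*s1*s2) ≤ ((k+m)^2/3 - m*k)*a + (4*(k+m)^2/3 - m^2)*b := by
    nlinarith [hX2, sq_nonneg (((k+m)^2/3 - m*k)*a - (4*(k+m)^2/3 - m^2)*b),
      mul_nonneg (mul_nonneg hm hs1) hs2,
      mul_nonneg hCa0 ha, mul_nonneg hCb0 hb]
  have h3 : m*s1^2 ≤ m*(k*a) := mul_le_mul_of_nonneg_left h1 hm
  have h4 : m*s2^2 ≤ m*(m*b) := mul_le_mul_of_nonneg_left h2 hm
  nlinarith [h3, h4, hcross]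

lemma sum_max_sq_le {n : ℕ} (hn : 1 ≤ n) (f : Fin n → ℝ) :
    ∑ e, (max |f e| ((∑ m, |f m|) / n)) ^ 2 ≤ (4/3) * ∑ e, f e ^ 2 := by
  have hn0 : (0:ℝ) < n := by exact_mod_cast hn
  set A : ℝ := (∑ m, |f m|) / n with hA
  set T : Finset (Fin n) := Finset.univ.filter (fun e => A ≤ |f e|) with hT
  set Tc : Finset (Fin n) := Finset.univ.filter (fun e => ¬ A ≤ |f e|) with hTc
  set a : ℝ := ∑ e ∈ T, |f e| ^ 2 with ha'
  set b : ℝ := ∑ e ∈ Tc, |f e| ^ 2 with hb'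
  set s1 : ℝ := ∑ e ∈ T, |f e| with hs1'
  set s2 : ℝ := ∑ e ∈ Tc, |f e| with hs2'
  set km : ℝ := (T.card : ℝ) with hkm'
  set mc : ℝ := (Tc.card : ℝ) with hmc'
  have hkm : km + mc = n := by
    rw [hkm', hmc', hT, hTc, ← Nat.cast_add,
      Finset.card_filter_add_card_filter_not]
    simp
  have hab : a + b = ∑ e, f e ^ 2 := by
    rw [ha', hb', hT, hTc,
      Finset.sum_filter_add_sum_filter_not Finset.univ (fun e => A ≤ |f e|)
        (fun e => |f e| ^ 2)]
    simp [sq_abs]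
  have hs : s1 + s2 = ∑ m, |f m| := by
    rw [hs1', hs2', hT, hTc,
      Finset.sum_filter_add_sum_filter_not Finset.univ (fun e => A ≤ |f e|) (fun e => |f e|)]
  have hCS1 : s1 ^ 2 ≤ km * a := sq_sum_le_card_mul_sum_sq
  have hCS2 : s2 ^ 2 ≤ mc * b := sq_sum_le_card_mul_sum_sq
  have ha0 : 0 ≤ a := Finset.sum_nonneg fun e _ => sq_nonneg _
  have hb0 : 0 ≤ b := Finset.sum_nonneg fun e _ => sq_nonneg _
  have hLHS : ∑ e, (max |f e| A) ^ 2 = a + mc * A ^ 2 := by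
    rw [← Finset.sum_filter_add_sum_filter_not Finset.univ (fun e => A ≤ |f e|)
      (fun e => (max |f e| A) ^ 2)]
    congr 1
    · exact Finset.sum_congr rfl fun e he =>
        by rw [max_eq_left (Finset.mem_filter.mp he).2]
    · calc ∑ e ∈ Tc, (max |f e| A) ^ 2 = ∑ e ∈ Tc, A ^ 2 :=
            Finset.sum_congr rfl fun e he => by
              rw [max_eq_right (le_of_not_ge (Finset.mem_filter.mp he).2)]
        _ = mc * A ^ 2 := by rw [Finset.sum_const, nsmul_eq_mul]
  rw [hLHS, ← hab]
  have hA2 : A = (s1 + s2) / n := by rw [hA, hs]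
  rw [hA2]
  have h2 : a + mc * ((s1+s2)/(n:ℝ))^2 = (a * (n:ℝ)^2 + mc * (s1+s2)^2) / (n:ℝ)^2 := by
    field_simp
  rw [h2, div_le_iff₀ (by positivity)]
  calc a * (n:ℝ)^2 + mc*(s1+s2)^2 = a*(km+mc)^2 + mc*(s1+s2)^2 := by rw [hkm]
    _ ≤ (4/3)*(a+b)*(km+mc)^2 :=
        key_alg km mc a b s1 s2 (Nat.cast_nonneg _) (Nat.cast_nonneg _) ha0 hb0
          (Finset.sum_nonneg fun e _ => abs_nonneg _)
          (Finset.sum_nonneg fun e _ => abs_nonneg _) hCS1 hCS2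
    _ = (4/3)*(a+b)*(n:ℝ)^2 := by rw [hkm]

lemma sqrt5_ge_two : (2:ℝ) ≤ Real.sqrt 5 :=
  (Real.le_sqrt (by norm_num) (by norm_num)).mpr (by norm_num)

lemma two_max_sq_le (x y : ℝ) :
    (max x ((x+y)/2))^2 + (max y ((x+y)/2))^2 ≤ (3 + Real.sqrt 5)/4 * (x^2 + y^2) := by
  have h5 : Real.sqrt 5 ^ 2 = 5 := Real.sq_sqrt (by norm_num)
  rcases le_total y x with h | h
  · rw [max_eq_left (by linarith), max_eq_right (by linarith)]
    have key : (3 + Real.sqrt 5)/4 * (x^2+y^2) - (x^2 + ((x+y)/2)^2)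
        = (Real.sqrt 5 - 2) * (x - (Real.sqrt 5+2)*y)^2 / 4 := by
      linear_combination ((-(2*x*y) + (Real.sqrt 5+2)*y^2)/4 + x*y - y^2
        - Real.sqrt 5/2*y^2) * h5
    nlinarith [mul_nonneg (sub_nonneg.mpr sqrt5_ge_two) (sq_nonneg (x - (Real.sqrt 5+2)*y))]
  · rw [max_eq_right (by linarith), max_eq_left (by linarith)]
    have key : (3 + Real.sqrt 5)/4 * (x^2+y^2) - (y^2 + ((x+y)/2)^2)
        = (Real.sqrt 5 - 2) * (y - (Real.sqrt 5+2)*x)^2 / 4 := by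
      linear_combination ((-(2*x*y) + (Real.sqrt 5+2)*x^2)/4 + x*y - x^2
        - Real.sqrt 5/2*x^2) * h5
    nlinarith [mul_nonneg (sub_nonneg.mpr sqrt5_ge_two) (sq_nonneg (y - (Real.sqrt 5+2)*x))]

lemma sum_sq_pos {V : Type*} [Fintype V] {f : V → ℝ} (hf : f ≠ 0) : 0 < ∑ v, f v ^ 2 := by
  obtain ⟨v, hv⟩ := Function.ne_iff.mp hf
  refine Finset.sum_pos' (fun i _ => sq_nonneg _) ⟨v, Finset.mem_univ v, ?_⟩
  have h0 : f v ≠ 0 := hv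
  exact lt_of_le_of_ne (sq_nonneg _) (Ne.symm (pow_ne_zero 2 h0))

lemma sup_eq {n : ℕ} (c : ℝ) (hc : 0 ≤ c)
    (hub : ∀ f : Fin n → ℝ, ∑ e, (max |f e| ((∑ m, |f m|)/(n:ℝ)))^2 ≤ c * ∑ e, f e^2)
    (g : Fin n → ℝ) (hg : g ≠ 0)
    (hgeq : ∑ e, (max |g e| ((∑ m, |g m|)/(n:ℝ)))^2 = c * ∑ e, g e^2) :
    sSup {r : ℝ | ∃ f : Fin n → ℝ, f ≠ 0 ∧
      r = nrm2 (mxHL (⊤ : SimpleGraph (Fin n)) f) / nrm2 f} = Real.sqrt c := by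
  have hval : ∀ f : Fin n → ℝ, nrm2 (mxHL (⊤ : SimpleGraph (Fin n)) f)
      = Real.sqrt (∑ e, (max |f e| ((∑ m, |f m|)/(n:ℝ)))^2) := by
    intro f
    unfold nrm2
    congr 1
    exact Finset.sum_congr rfl fun e _ => by rw [mxHL_top]
  have hmem : Real.sqrt c ∈ {r : ℝ | ∃ f : Fin n → ℝ, f ≠ 0 ∧
      r = nrm2 (mxHL (⊤ : SimpleGraph (Fin n)) f) / nrm2 f} := by
    refine ⟨g, hg, ?_⟩
    rw [hval g, hgeq, Real.sqrt_mul hc]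
    have hpos : 0 < Real.sqrt (∑ v, g v ^ 2) := Real.sqrt_pos.mpr (sum_sq_pos hg)
    unfold nrm2
    rw [mul_div_assoc, div_self (ne_of_gt hpos), mul_one]
  have hub' : ∀ r ∈ {r : ℝ | ∃ f : Fin n → ℝ, f ≠ 0 ∧
      r = nrm2 (mxHL (⊤ : SimpleGraph (Fin n)) f) / nrm2 f}, r ≤ Real.sqrt c := by
    rintro r ⟨f, hf, rfl⟩
    rw [hval f]
    have h1 : Real.sqrt (∑ e, (max |f e| ((∑ m, |f m|)/(n:ℝ)))^2)
        ≤ Real.sqrt c * Real.sqrt (∑ v, f v ^ 2) := by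
      rw [← Real.sqrt_mul hc]
      exact Real.sqrt_le_sqrt (hub f)
    have hpos : 0 < nrm2 f := Real.sqrt_pos.mpr (sum_sq_pos hf)
    rw [div_le_iff₀ hpos]
    exact h1
  exact le_antisymm (csSup_le ⟨_, hmem⟩ hub') (le_csSup ⟨_, hub'⟩ hmem)

lemma sum_ite_lt {m : ℕ} (c d : ℝ) :
    ∑ e : Fin (3*m), (if (e:ℕ) < m then c else d) = (m:ℝ) * c + (2*(m:ℝ)) * d := by
  rw [Fin.sum_univ_eq_sum_range (fun i => if i < m then c else d) (3*m)]
  rw [Finset.range_eq_Ico,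
    ← Finset.sum_Ico_consecutive _ (Nat.zero_le m) (by omega : m ≤ 3*m)]
  have h1 : ∑ i ∈ Finset.Ico 0 m, (if i < m then c else d) = (m:ℝ) * c := by
    rw [Finset.sum_congr rfl (fun i hi => if_pos (Finset.mem_Ico.mp hi).2),
      Finset.sum_const, Nat.card_Ico, nsmul_eq_mul]
    simp
  have h2 : ∑ i ∈ Finset.Ico m (3*m), (if i < m then c else d) = (2*(m:ℝ)) * d := by
    rw [Finset.sum_congr rfl (fun i hi =>
        if_neg (by have := (Finset.mem_Ico.mp hi).1; omega)),
      Finset.sum_const, Nat.card_Ico, nsmul_eq_mul]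
    congr 1
    have h3 : 3*m - m = 2*m := by omega
    rw [h3]
    push_cast
    ring
  rw [h1, h2]

/-- `‖M_{K_{3m}}‖₂ = (4/3)^(1/2)` for every `m ≥ 1`, and
`‖M_{K_2}‖₂ = (3 + √5)^(1/2) / 2`. -/
theorem completeGraph_l2_norm_multiple_of_three :
    (∀ m : ℕ, 1 ≤ m →
      sSup {c : ℝ | ∃ f : Fin (3 * m) → ℝ, f ≠ 0 ∧
          c = nrm2 (mxHL (⊤ : SimpleGraph (Fin (3 * m))) f) / nrm2 f} =
        Real.sqrt (4 / 3)) ∧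
    sSup {c : ℝ | ∃ f : Fin 2 → ℝ, f ≠ 0 ∧
        c = nrm2 (mxHL (⊤ : SimpleGraph (Fin 2)) f) / nrm2 f} =
      Real.sqrt (3 + Real.sqrt 5) / 2 := by
  constructor
  · intro m hm
    have hub : ∀ f : Fin (3*m) → ℝ,
        ∑ e, (max |f e| ((∑ mm, |f mm|)/((3*m : ℕ):ℝ)))^2 ≤ (4/3) * ∑ e, f e^2 :=
      fun f => sum_max_sq_le (by omega) f
    set g : Fin (3*m) → ℝ := fun e => if (e:ℕ) < m then 4 else 1 with hgdef
    have hgabs : ∀ e, |g e| = if (e:ℕ) < m then (4:ℝ) else 1 := by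
      intro e
      simp only [hgdef]
      split_ifs <;> norm_num
    have hS1 : ∑ e : Fin (3*m), |g e| = 6*(m:ℝ) := by
      rw [Finset.sum_congr rfl fun e _ => hgabs e, sum_ite_lt]; ring
    have hSg2 : ∑ e, g e^2 = 18*(m:ℝ) := by
      have hpt : ∀ e : Fin (3*m), g e ^ 2 = if (e:ℕ) < m then (16:ℝ) else 1 := by
        intro e; simp only [hgdef]; split_ifs <;> norm_num
      rw [Finset.sum_congr rfl fun e _ => hpt e, sum_ite_lt]; ring
    have hA : (∑ e : Fin (3*m), |g e|) / ((3*m : ℕ):ℝ) = 2 := by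
      rw [hS1]
      have hm0 : (0:ℝ) < (m:ℝ) := by exact_mod_cast hm
      push_cast
      rw [div_eq_iff (by positivity)]
      ring
    have hmaxsum : ∑ e, (max |g e| ((∑ mm, |g mm|)/((3*m : ℕ):ℝ)))^2 = 24*(m:ℝ) := by
      rw [hA]
      have hpt : ∀ e : Fin (3*m), (max |g e| 2)^2 = if (e:ℕ) < m then (16:ℝ) else 4 := by
        intro e
        rw [hgabs e]
        split_ifs with h
        · rw [max_eq_left (by norm_num)]; norm_num
        · rw [max_eq_right (by norm_num)]; norm_num
      rw [Finset.sum_congr rfl fun e _ => hpt e, sum_ite_lt]; ring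
    have hgeq : ∑ e, (max |g e| ((∑ mm, |g mm|)/((3*m : ℕ):ℝ)))^2 = (4/3) * ∑ e, g e^2 := by
      rw [hmaxsum, hSg2]; ring
    have hgne : g ≠ 0 := by
      intro hzero
      have h4 : g ⟨0, by omega⟩ = 4 := if_pos hm
      rw [hzero] at h4
      simp at h4
    exact sup_eq (4/3) (by norm_num) hub g hgne hgeq
  · have hub : ∀ f : Fin 2 → ℝ,
        ∑ e, (max |f e| ((∑ mm, |f mm|)/((2 : ℕ):ℝ)))^2
          ≤ (3+Real.sqrt 5)/4 * ∑ e, f e^2 := by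
      intro f
      simp only [Fin.sum_univ_two]
      have h2 : ((2:ℕ):ℝ) = 2 := by norm_num
      rw [h2]
      have := two_max_sq_le |f 0| |f 1|
      simpa [sq_abs] using this
    set g : Fin 2 → ℝ := fun e => if e = 0 then 2 + Real.sqrt 5 else 1 with hgdef
    have hg0 : g 0 = 2 + Real.sqrt 5 := by simp [hgdef]
    have hg1 : g 1 = 1 := by simp [hgdef]
    have hs5 : (0:ℝ) ≤ Real.sqrt 5 := Real.sqrt_nonneg 5
    have h5 : Real.sqrt 5 ^ 2 = 5 := Real.sq_sqrt (by norm_num)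
    have habs0 : |g 0| = 2 + Real.sqrt 5 := by rw [hg0]; exact abs_of_nonneg (by linarith)
    have habs1 : |g 1| = 1 := by rw [hg1]; norm_num
    have hS : ∑ mm, |g mm| = 3 + Real.sqrt 5 := by
      rw [Fin.sum_univ_two, habs0, habs1]; ring
    have hA : (∑ mm, |g mm|) / ((2 : ℕ):ℝ) = (3 + Real.sqrt 5)/2 := by
      rw [hS]; norm_num
    have hgeq : ∑ e, (max |g e| ((∑ mm, |g mm|)/((2 : ℕ):ℝ)))^2
        = (3+Real.sqrt 5)/4 * ∑ e, g e^2 := by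
      rw [Fin.sum_univ_two, hA, habs0, habs1,
        max_eq_left (by linarith), max_eq_right (by linarith),
        Fin.sum_univ_two, hg0, hg1]
      linear_combination (-(2+Real.sqrt 5)/4) * h5
    have hgne : g ≠ 0 := by
      intro hzero
      have h4 : g 0 = 2 + Real.sqrt 5 := hg0
      rw [hzero] at h4
      simp at h4
      linarith
    have := sup_eq ((3+Real.sqrt 5)/4) (by positivity) hub g hgne hgeq
    rw [this, Real.sqrt_div (by positivity) 4]
    have h4 : Real.sqrt 4 = 2 := by
      rw [show (4:ℝ) = 2^2 by norm_num, Real.sqrt_sq (by norm_num : (0:ℝ) ≤ 2)]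
    rw [h4]
end

section
/- Let n ≥ 3 and consider the star graph S_n with center a_1. Define f : V(S_n) → ℝ by f(a_1) = n, f(a_2) = 2n − 1, and f(a_i) = n − 1 for 3 ≤ i ≤ n. Then Var_2(M_{S_n} f) / Var_2 f = ((n−1)² + (n−2))^{1/2} / n, and this quantity is strictly greater than (n−1)/n. In particular, sup{ Var_2(M_{S_n} f)/Var_2 f : Var_2 f > 0 } > 1 − 1/n, so the analogue for p = 2 of the identity C_{S_n,p} = 1 − 1/n fails. -/
open scoped Classical

section star
variable {n : ℕ} (hn : 3 ≤ n)
include hn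

lemma star_adj_z (v : Fin n) (hv : v.val ≠ 0) : (starG n).Adj v ⟨0, Nat.lt_of_lt_of_le (by decide : 0 < 3) hn⟩ :=
  ⟨fun h => hv (by simp [h]), Or.inr rfl⟩

lemma star_dist_z_le (v : Fin n) : (starG n).dist v ⟨0, Nat.lt_of_lt_of_le (by decide : 0 < 3) hn⟩ ≤ 1 := by
  by_cases hv : v.val = 0
  · have : v = (⟨0, Nat.lt_of_lt_of_le (by decide : 0 < 3) hn⟩ : Fin n) := Fin.ext hv
    simp [this, SimpleGraph.dist_self]
  · exact le_of_eq (SimpleGraph.dist_eq_one_iff_adj.2 (star_adj_z hn v hv))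

lemma star_connected : (starG n).Connected := by
  rw [SimpleGraph.connected_iff]
  refine ⟨fun v w => ?_, ⟨⟨0, Nat.lt_of_lt_of_le (by decide : 0 < 3) hn⟩⟩⟩
  have h1 : ∀ u : Fin n, (starG n).Reachable u ⟨0, Nat.lt_of_lt_of_le (by decide : 0 < 3) hn⟩ := by
    intro u
    by_cases hu : u.val = 0
    · have : u = (⟨0, Nat.lt_of_lt_of_le (by decide : 0 < 3) hn⟩ : Fin n) := Fin.ext hu
      rw [this]
    · exact (star_adj_z hn u hu).reachable
  exact (h1 v).trans (h1 w).symm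

lemma star_dist_le_two (v w : Fin n) : (starG n).dist v w ≤ 2 := by
  calc (starG n).dist v w ≤ (starG n).dist v ⟨0, Nat.lt_of_lt_of_le (by decide : 0 < 3) hn⟩ + (starG n).dist ⟨0, Nat.lt_of_lt_of_le (by decide : 0 < 3) hn⟩ w :=
        (star_connected hn).dist_triangle
    _ ≤ 1 + 1 := by
        refine add_le_add (star_dist_z_le hn v) ?_
        rw [SimpleGraph.dist_comm]; exact star_dist_z_le hn w

lemma gball_big (e : Fin n) (r : ℕ) (hr : 2 ≤ r) : gball (starG n) e r = Finset.univ := by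
  ext m
  simp only [gball, Finset.mem_filter, Finset.mem_univ, true_and, iff_true]
  exact ⟨(star_connected hn).preconnected e m, le_trans (star_dist_le_two hn e m) hr⟩

lemma gball_zero (e : Fin n) : gball (starG n) e 0 = {e} := by
  ext m
  simp only [gball, Finset.mem_filter, Finset.mem_univ, true_and, Finset.mem_singleton,
    Nat.le_zero]
  constructor
  · rintro ⟨hre, hd⟩
    exact (hre.dist_eq_zero_iff.1 hd).symm
  · rintro rfl
    exact ⟨SimpleGraph.Reachable.refl m, SimpleGraph.dist_self⟩

lemma gball_center_one (r : ℕ) (hr : 1 ≤ r) :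
    gball (starG n) (⟨0, Nat.lt_of_lt_of_le (by decide : 0 < 3) hn⟩ : Fin n) r = Finset.univ := by
  ext m
  simp only [gball, Finset.mem_filter, Finset.mem_univ, true_and, iff_true]
  refine ⟨(star_connected hn).preconnected _ m, ?_⟩
  calc (starG n).dist ⟨0, Nat.lt_of_lt_of_le (by decide : 0 < 3) hn⟩ m ≤ 1 := by
        rw [SimpleGraph.dist_comm]; exact star_dist_z_le hn m
    _ ≤ r := hr

lemma gball_leaf_one (v : Fin n) (hv : v.val ≠ 0) :
    gball (starG n) v 1 = {v, ⟨0, Nat.lt_of_lt_of_le (by decide : 0 < 3) hn⟩} := by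
  ext m
  simp only [gball, Finset.mem_filter, Finset.mem_univ, true_and, Finset.mem_insert,
    Finset.mem_singleton]
  constructor
  · rintro ⟨hre, hd⟩
    interval_cases h : (starG n).dist v m
    · exact Or.inl (hre.dist_eq_zero_iff.1 h).symm
    · have hadj : (starG n).Adj v m := SimpleGraph.dist_eq_one_iff_adj.1 h
      rcases hadj.2 with h0 | h0
      · exact absurd h0 hv
      · exact Or.inr (Fin.ext h0)
  · rintro (rfl | rfl)
    · exact ⟨SimpleGraph.Reachable.refl m, by simp [SimpleGraph.dist_self]⟩
    · exact ⟨(star_adj_z hn v hv).reachable, le_of_eq (SimpleGraph.dist_eq_one_iff_adj.2 (star_adj_z hn v hv))⟩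

end star

section sums
variable {n : ℕ} (hn : 3 ≤ n)
include hn

lemma sum_erase_z (g : Fin n → ℝ) (b c : ℝ) (h1 : g ⟨1, Nat.lt_of_lt_of_le (by decide : 1 < 3) hn⟩ = b)
    (hc : ∀ v : Fin n, v.val ≠ 0 → v.val ≠ 1 → g v = c) :
    ∑ w ∈ Finset.univ.erase ⟨0, Nat.lt_of_lt_of_le (by decide : 0 < 3) hn⟩, g w = b + ((n : ℝ) - 2) * c := by
  have ho : (⟨1, Nat.lt_of_lt_of_le (by decide : 1 < 3) hn⟩ : Fin n) ∈ Finset.univ.erase (⟨0, Nat.lt_of_lt_of_le (by decide : 0 < 3) hn⟩ : Fin n) := by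
    simp [Finset.mem_erase, Fin.ext_iff]
  rw [← Finset.add_sum_erase _ g ho, h1]
  have hrest : ∀ v ∈ (Finset.univ.erase (⟨0, Nat.lt_of_lt_of_le (by decide : 0 < 3) hn⟩ : Fin n)).erase ⟨1, Nat.lt_of_lt_of_le (by decide : 1 < 3) hn⟩,
      g v = c := by
    intro v hv
    simp only [Finset.mem_erase] at hv
    exact hc v (fun h => hv.2.1 (Fin.ext h)) (fun h => hv.1 (Fin.ext h))
  rw [Finset.sum_congr rfl hrest, Finset.sum_const]
  have hcard : ((Finset.univ.erase (⟨0, Nat.lt_of_lt_of_le (by decide : 0 < 3) hn⟩ : Fin n)).erase ⟨1, Nat.lt_of_lt_of_le (by decide : 1 < 3) hn⟩).card = n - 2 := by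
    rw [Finset.card_erase_of_mem ho, Finset.card_erase_of_mem (Finset.mem_univ _)]
    simp; omega
  rw [hcard, nsmul_eq_mul]
  have : ((n - 2 : ℕ) : ℝ) = (n : ℝ) - 2 := by
    have : (2:ℕ) ≤ n := by omega
    push_cast [this]; ring
  rw [this]

lemma sum_three (g : Fin n → ℝ) (a b c : ℝ) (h0 : g ⟨0, Nat.lt_of_lt_of_le (by decide : 0 < 3) hn⟩ = a) (h1 : g ⟨1, Nat.lt_of_lt_of_le (by decide : 1 < 3) hn⟩ = b)
    (hc : ∀ v : Fin n, v.val ≠ 0 → v.val ≠ 1 → g v = c) :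
    ∑ v : Fin n, g v = a + (b + ((n : ℝ) - 2) * c) := by
  rw [← Finset.add_sum_erase _ g (Finset.mem_univ (⟨0, Nat.lt_of_lt_of_le (by decide : 0 < 3) hn⟩ : Fin n)), h0,
    sum_erase_z hn g b c h1 hc]

lemma double_sum_eq (g : Fin n → ℝ) :
    ∑ v : Fin n, ∑ w : Fin n, (if (starG n).Adj v w then |g v - g w| ^ (2:ℝ) else 0)
    = 2 * ∑ w ∈ Finset.univ.erase ⟨0, Nat.lt_of_lt_of_le (by decide : 0 < 3) hn⟩,
        |g ⟨0, Nat.lt_of_lt_of_le (by decide : 0 < 3) hn⟩ - g w| ^ (2:ℝ) := by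
  set z : Fin n := ⟨0, Nat.lt_of_lt_of_le (by decide : 0 < 3) hn⟩ with hz
  have inner_z : ∑ w : Fin n, (if (starG n).Adj z w then |g z - g w| ^ (2:ℝ) else 0)
      = ∑ w ∈ Finset.univ.erase z, |g z - g w| ^ (2:ℝ) := by
    rw [← Finset.sum_filter]
    congr 1
    ext w
    simp only [Finset.mem_filter, Finset.mem_univ, true_and, Finset.mem_erase]
    constructor
    · rintro ⟨hne, _⟩; exact ⟨fun h => hne (h ▸ rfl), trivial⟩
    · rintro ⟨hne, _⟩; exact ⟨fun h => hne (h ▸ rfl), Or.inl rfl⟩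
  have inner_v : ∀ v : Fin n, v ≠ z →
      ∑ w : Fin n, (if (starG n).Adj v w then |g v - g w| ^ (2:ℝ) else 0)
      = |g v - g z| ^ (2:ℝ) := by
    intro v hv
    have hv0 : v.val ≠ 0 := fun h => hv (Fin.ext h)
    rw [← Finset.sum_filter]
    have : Finset.univ.filter (fun w => (starG n).Adj v w) = {z} := by
      ext w
      simp only [Finset.mem_filter, Finset.mem_univ, true_and, Finset.mem_singleton]
      constructor
      · rintro ⟨hne, h0 | h0⟩
        · exact absurd h0 hv0
        · exact Fin.ext h0
      · rintro rfl
        exact ⟨fun h => hv0 (by simp [h, hz]), Or.inr rfl⟩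
    rw [this, Finset.sum_singleton]
  rw [← Finset.add_sum_erase _ _ (Finset.mem_univ z), inner_z,
    Finset.sum_congr rfl (fun v hv => inner_v v (Finset.mem_erase.1 hv).1)]
  have : ∀ v ∈ Finset.univ.erase z, |g v - g z| ^ (2:ℝ) = |g z - g v| ^ (2:ℝ) := by
    intro v _; rw [abs_sub_comm]
  rw [Finset.sum_congr rfl this]; ring

end sums

lemma rp2 (x : ℝ) : x ^ (2:ℝ) = x ^ 2 := by
  rw [show (2:ℝ) = ((2:ℕ):ℝ) by norm_num, Real.rpow_natCast]

lemma iSup_eq_of_max (u : ℕ → ℝ) (M : ℝ) (r0 : ℕ) (hub : ∀ r, u r ≤ M) (hit : u r0 = M) :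
    ⨆ r, u r = M := by
  refine le_antisymm (ciSup_le hub) ?_
  calc M = u r0 := hit.symm
    _ ≤ ⨆ r, u r := le_ciSup ⟨M, by rintro x ⟨r, rfl⟩; exact hub r⟩ r0

lemma card_univ_fin (n : ℕ) : ((Finset.univ : Finset (Fin n)).card : ℝ) = (n:ℝ) := by simp

section maxf
variable {n : ℕ} (hn : 3 ≤ n) (f : Fin n → ℝ)
  (h0 : f ⟨0, Nat.lt_of_lt_of_le (by decide : 0 < 3) hn⟩ = (n:ℝ)) (h1 : f ⟨1, Nat.lt_of_lt_of_le (by decide : 1 < 3) hn⟩ = 2*(n:ℝ)-1)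
  (hc : ∀ v : Fin n, v.val ≠ 0 → v.val ≠ 1 → f v = (n:ℝ)-1)
include hn h0 h1 hc

lemma sum_abs_f : ∑ m : Fin n, |f m| = (n:ℝ)^2 + 1 := by
  have hN : (3:ℝ) ≤ (n:ℝ) := by exact_mod_cast hn
  rw [sum_three hn (fun m => |f m|) ((n:ℝ)) (2*(n:ℝ)-1) ((n:ℝ)-1)
    (by simp only [h0]; exact abs_of_nonneg (by linarith))
    (by simp only [h1]; exact abs_of_nonneg (by linarith))
    (fun v hv0 hv1 => by simp only [hc v hv0 hv1]; exact abs_of_nonneg (by linarith))]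
  ring

lemma mxHL_center : mxHL (starG n) f ⟨0, Nat.lt_of_lt_of_le (by decide : 0 < 3) hn⟩ = ((n:ℝ)^2 + 1)/n := by
  have hN : (3:ℝ) ≤ (n:ℝ) := by exact_mod_cast hn
  rw [mxHL]
  refine iSup_eq_of_max _ _ 1 ?_ ?_
  · intro r
    rcases r with _ | r
    · rw [gball_zero hn, Finset.sum_singleton, h0, Finset.card_singleton]
      rw [abs_of_nonneg (by linarith : (0:ℝ) ≤ (n:ℝ))]
      rw [le_div_iff₀ (by linarith)]
      nlinarith
    · rw [gball_center_one hn (r+1) (by omega), sum_abs_f hn f h0 h1 hc, card_univ_fin n]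
      rw [one_div_mul_eq_div]
  · rw [gball_center_one hn 1 le_rfl, sum_abs_f hn f h0 h1 hc, card_univ_fin n,
      one_div_mul_eq_div]

lemma mxHL_one : mxHL (starG n) f ⟨1, Nat.lt_of_lt_of_le (by decide : 1 < 3) hn⟩ = 2*(n:ℝ) - 1 := by
  have hN : (3:ℝ) ≤ (n:ℝ) := by exact_mod_cast hn
  have hv1 : ((⟨1, Nat.lt_of_lt_of_le (by decide : 1 < 3) hn⟩ : Fin n)).val ≠ 0 := by simp
  have hne : (⟨1, Nat.lt_of_lt_of_le (by decide : 1 < 3) hn⟩ : Fin n) ≠ ⟨0, Nat.lt_of_lt_of_le (by decide : 0 < 3) hn⟩ := by simp [Fin.ext_iff]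
  rw [mxHL]
  refine iSup_eq_of_max _ _ 0 ?_ ?_
  · intro r
    rcases r with _ | r
    · rw [gball_zero hn, Finset.sum_singleton, h1, Finset.card_singleton]
      rw [abs_of_nonneg (by linarith : (0:ℝ) ≤ 2*(n:ℝ)-1)]
      norm_num
    rcases r with _ | r
    · rw [gball_leaf_one hn _ hv1, Finset.sum_pair hne, h0, h1,
        Finset.card_pair hne]
      rw [abs_of_nonneg (by linarith : (0:ℝ) ≤ 2*(n:ℝ)-1),
        abs_of_nonneg (by linarith : (0:ℝ) ≤ (n:ℝ))]
      rw [one_div_mul_eq_div, div_le_iff₀ (by norm_num)]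
      push_cast
      linarith
    · rw [gball_big hn _ (r+2) (by omega), sum_abs_f hn f h0 h1 hc, card_univ_fin n,
        one_div_mul_eq_div, div_le_iff₀ (by linarith)]
      nlinarith
  · rw [gball_zero hn, Finset.sum_singleton, h1, Finset.card_singleton]
    rw [abs_of_nonneg (by linarith : (0:ℝ) ≤ 2*(n:ℝ)-1)]
    norm_num

lemma mxHL_other (v : Fin n) (hv0 : v.val ≠ 0) (hv1 : v.val ≠ 1) :
    mxHL (starG n) f v = ((n:ℝ)^2 + 1)/n := by
  have hN : (3:ℝ) ≤ (n:ℝ) := by exact_mod_cast hn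
  have hne : v ≠ (⟨0, Nat.lt_of_lt_of_le (by decide : 0 < 3) hn⟩ : Fin n) := by simp [Fin.ext_iff]; exact hv0
  rw [mxHL]
  refine iSup_eq_of_max _ _ 2 ?_ ?_
  · intro r
    rcases r with _ | r
    · rw [gball_zero hn, Finset.sum_singleton, hc v hv0 hv1, Finset.card_singleton]
      rw [abs_of_nonneg (by linarith : (0:ℝ) ≤ (n:ℝ)-1)]
      rw [le_div_iff₀ (by linarith)]
      nlinarith
    rcases r with _ | r
    · rw [gball_leaf_one hn _ hv0, Finset.sum_pair hne, h0, hc v hv0 hv1,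
        Finset.card_pair hne]
      rw [abs_of_nonneg (by linarith : (0:ℝ) ≤ (n:ℝ)-1),
        abs_of_nonneg (by linarith : (0:ℝ) ≤ (n:ℝ))]
      rw [one_div_mul_eq_div, div_le_div_iff₀ (by norm_num) (by linarith)]
      push_cast
      nlinarith
    · rw [gball_big hn _ (r+2) (by omega), sum_abs_f hn f h0 h1 hc, card_univ_fin n,
        one_div_mul_eq_div]
  · rw [gball_big hn _ 2 le_rfl, sum_abs_f hn f h0 h1 hc, card_univ_fin n,
      one_div_mul_eq_div]

end maxf

lemma ite_sq_nonneg {V : Type*} (G : SimpleGraph V) [DecidableRel G.Adj] (g : V → ℝ) (v w : V) :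
    0 ≤ if G.Adj v w then |g v - g w| ^ (2:ℝ) else 0 := by
  split
  · exact Real.rpow_nonneg (abs_nonneg _) _
  · exact le_rfl

lemma dsum_nonneg {V : Type*} [Fintype V] (G : SimpleGraph V) [DecidableRel G.Adj] (g : V → ℝ) :
    0 ≤ ∑ v : V, ∑ w : V, if G.Adj v w then |g v - g w| ^ (2:ℝ) else 0 :=
  Finset.sum_nonneg fun v _ => Finset.sum_nonneg fun w _ => ite_sq_nonneg G g v w

lemma vp_two_sqrt {V : Type*} [Fintype V] (G : SimpleGraph V) (g : V → ℝ) :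
    vp G 2 g = Real.sqrt
      ((1/2) * ∑ v : V, ∑ w : V, if G.Adj v w then |g v - g w| ^ (2:ℝ) else 0) := by
  rw [vp, ← Real.sqrt_eq_rpow]

section vpstar
variable {n : ℕ} (hn : 3 ≤ n)
include hn

lemma vp_star (g : Fin n → ℝ) (b c : ℝ)
    (hb : |g ⟨0, Nat.lt_of_lt_of_le (by decide : 0 < 3) hn⟩ - g ⟨1, Nat.lt_of_lt_of_le (by decide : 1 < 3) hn⟩| ^ (2:ℝ) = b)
    (hcc : ∀ v : Fin n, v.val ≠ 0 → v.val ≠ 1 → |g ⟨0, Nat.lt_of_lt_of_le (by decide : 0 < 3) hn⟩ - g v| ^ (2:ℝ) = c) :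
    vp (starG n) 2 g = Real.sqrt (b + ((n:ℝ) - 2) * c) := by
  rw [vp_two_sqrt, double_sum_eq hn,
    sum_erase_z hn (fun w => |g ⟨0, Nat.lt_of_lt_of_le (by decide : 0 < 3) hn⟩ - g w| ^ (2:ℝ)) b c hb hcc]
  congr 1
  ring

end vpstar

lemma e_mem_gball {V : Type*} [Fintype V] (G : SimpleGraph V) (e : V) (r : ℕ) :
    e ∈ gball G e r := by
  simp only [gball, Finset.mem_filter, Finset.mem_univ, true_and]
  exact ⟨SimpleGraph.Reachable.refl e, by simp [SimpleGraph.dist_self]⟩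

lemma mxHL_mem_Icc {V : Type*} [Fintype V] (G : SimpleGraph V) (g : V → ℝ) (e : V)
    (lo hi : ℝ) (hlo : ∀ m, lo ≤ |g m|) (hhi : ∀ m, |g m| ≤ hi) :
    mxHL G g e ∈ Set.Icc lo hi := by
  have key : ∀ r : ℕ, lo ≤ (1 / ((gball G e r).card : ℝ)) * ∑ m ∈ gball G e r, |g m| ∧
      (1 / ((gball G e r).card : ℝ)) * ∑ m ∈ gball G e r, |g m| ≤ hi := by
    intro r
    have hne : (gball G e r).Nonempty := ⟨e, e_mem_gball G e r⟩
    have hcard : (0:ℝ) < ((gball G e r).card : ℝ) := by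
      exact_mod_cast Finset.card_pos.2 hne
    constructor
    · rw [one_div_mul_eq_div, le_div_iff₀ hcard]
      have h := Finset.card_nsmul_le_sum (gball G e r) (fun m => |g m|) lo (fun m _ => hlo m)
      rw [nsmul_eq_mul] at h
      linarith
    · rw [one_div_mul_eq_div, div_le_iff₀ hcard]
      have h := Finset.sum_le_card_nsmul (gball G e r) (fun m => |g m|) hi (fun m _ => hhi m)
      rw [nsmul_eq_mul] at h
      linarith
  have hbdd : BddAbove (Set.range fun r : ℕ =>
      (1 / ((gball G e r).card : ℝ)) * ∑ m ∈ gball G e r, |g m|) := by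
    refine ⟨hi, ?_⟩
    rintro x ⟨r, rfl⟩
    exact (key r).2
  constructor
  · exact le_trans (key 0).1 (le_ciSup hbdd 0)
  · exact ciSup_le fun r => (key r).2

section ratio
variable {n : ℕ} (hn : 3 ≤ n)
include hn

lemma single_edge_bound (g : Fin n → ℝ) (u : Fin n) :
    |g u - g ⟨0, Nat.lt_of_lt_of_le (by decide : 0 < 3) hn⟩| ≤ Real.sqrt
      (∑ v : Fin n, ∑ w : Fin n, if (starG n).Adj v w then |g v - g w| ^ (2:ℝ) else 0) := by
  set D := ∑ v : Fin n, ∑ w : Fin n, if (starG n).Adj v w then |g v - g w| ^ (2:ℝ) else 0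
    with hD
  by_cases hu : u = (⟨0, Nat.lt_of_lt_of_le (by decide : 0 < 3) hn⟩ : Fin n)
  · rw [hu]
    simp only [sub_self, abs_zero]
    exact Real.sqrt_nonneg _
  · have hadj : (starG n).Adj u ⟨0, Nat.lt_of_lt_of_le (by decide : 0 < 3) hn⟩ :=
      star_adj_z hn u (fun h => hu (Fin.ext h))
    have h1 : |g u - g ⟨0, Nat.lt_of_lt_of_le (by decide : 0 < 3) hn⟩| ^ (2:ℝ) ≤ D := by
      calc |g u - g ⟨0, Nat.lt_of_lt_of_le (by decide : 0 < 3) hn⟩| ^ (2:ℝ)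
          = (if (starG n).Adj u ⟨0, Nat.lt_of_lt_of_le (by decide : 0 < 3) hn⟩ then |g u - g ⟨0, Nat.lt_of_lt_of_le (by decide : 0 < 3) hn⟩| ^ (2:ℝ) else 0)
            := by rw [if_pos hadj]
        _ ≤ ∑ w : Fin n, (if (starG n).Adj u w then |g u - g w| ^ (2:ℝ) else 0) :=
            Finset.single_le_sum (fun w _ => ite_sq_nonneg _ g u w) (Finset.mem_univ _)
        _ ≤ D := Finset.single_le_sum
            (fun v _ => Finset.sum_nonneg fun w _ => ite_sq_nonneg _ g v w) (Finset.mem_univ u)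
    rw [rp2] at h1
    calc |g u - g ⟨0, Nat.lt_of_lt_of_le (by decide : 0 < 3) hn⟩| = Real.sqrt (|g u - g ⟨0, Nat.lt_of_lt_of_le (by decide : 0 < 3) hn⟩| ^ 2) :=
          (Real.sqrt_sq (abs_nonneg _)).symm
      _ ≤ Real.sqrt D := Real.sqrt_le_sqrt h1

lemma pair_bound (g : Fin n → ℝ) (u w : Fin n) :
    |g u - g w| ≤ 2 * Real.sqrt
      (∑ v : Fin n, ∑ w : Fin n, if (starG n).Adj v w then |g v - g w| ^ (2:ℝ) else 0) := by
  have h1 := single_edge_bound hn g u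
  have h2 := single_edge_bound hn g w
  rw [abs_sub_comm] at h2
  have h3 := abs_sub_le (g u) (g ⟨0, Nat.lt_of_lt_of_le (by decide : 0 < 3) hn⟩) (g w)
  linarith

lemma ratio_bound (g : Fin n → ℝ) :
    vp (starG n) 2 (mxHL (starG n) g) ≤ 2 * (n:ℝ) * vp (starG n) 2 g := by
  set D := ∑ v : Fin n, ∑ w : Fin n, if (starG n).Adj v w then |g v - g w| ^ (2:ℝ) else 0
    with hD
  have hDnn : 0 ≤ D := dsum_nonneg _ g
  have hNpos : (0:ℝ) < n := by
    have : (3:ℝ) ≤ (n:ℝ) := by exact_mod_cast hn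
    linarith
  -- bounds for the maximal function
  have hne : (Finset.univ : Finset (Fin n)).Nonempty := ⟨⟨0, Nat.lt_of_lt_of_le (by decide : 0 < 3) hn⟩, Finset.mem_univ _⟩
  obtain ⟨umax, -, humax⟩ := Finset.exists_mem_eq_sup' hne (fun m => |g m|)
  obtain ⟨umin, -, humin⟩ := Finset.exists_mem_eq_inf' hne (fun m => |g m|)
  set lo := Finset.univ.inf' hne (fun m => |g m|) with hlo
  set hi := Finset.univ.sup' hne (fun m => |g m|) with hhi
  have hIcc : ∀ e : Fin n, mxHL (starG n) g e ∈ Set.Icc lo hi :=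
    fun e => mxHL_mem_Icc _ g e lo hi
      (fun m => Finset.inf'_le (fun m => |g m|) (Finset.mem_univ m))
      (fun m => Finset.le_sup' (fun m => |g m|) (Finset.mem_univ m))
  have hgap : hi - lo ≤ 2 * Real.sqrt D := by
    rw [humax, humin]
    calc |g umax| - |g umin| ≤ |g umax - g umin| := by
          have := abs_sub_abs_le_abs_sub (g umax) (g umin)
          linarith [le_abs_self (g umax - g umin)]
      _ ≤ 2 * Real.sqrt D := pair_bound hn g umax umin
  have hMdiff : ∀ v w : Fin n, |mxHL (starG n) g v - mxHL (starG n) g w| ≤ 2 * Real.sqrt D := by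
    intro v w
    obtain ⟨hv1, hv2⟩ := hIcc v
    obtain ⟨hw1, hw2⟩ := hIcc w
    rw [abs_le]
    constructor <;> linarith
  -- bound the double sum for the maximal function
  have hXM : ∑ v : Fin n, ∑ w : Fin n,
      (if (starG n).Adj v w then |mxHL (starG n) g v - mxHL (starG n) g w| ^ (2:ℝ) else 0)
      ≤ (n:ℝ)^2 * (4 * D) := by
    calc ∑ v : Fin n, ∑ w : Fin n,
        (if (starG n).Adj v w then |mxHL (starG n) g v - mxHL (starG n) g w| ^ (2:ℝ) else 0)
        ≤ ∑ _v : Fin n, ∑ _w : Fin n, (4 * D) := by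
          refine Finset.sum_le_sum fun v _ => Finset.sum_le_sum fun w _ => ?_
          split
          · rw [rp2]
            calc |mxHL (starG n) g v - mxHL (starG n) g w| ^ 2
                ≤ (2 * Real.sqrt D) ^ 2 := by
                  apply sq_le_sq'
                  · have h1 := Real.sqrt_nonneg D
                    have h2 := abs_nonneg (mxHL (starG n) g v - mxHL (starG n) g w)
                    linarith
                  · exact hMdiff v w
              _ = 4 * (Real.sqrt D ^ 2) := by ring
              _ = 4 * D := by rw [Real.sq_sqrt hDnn]
          · nlinarith
      _ = (n:ℝ)^2 * (4 * D) := by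
          simp [Finset.sum_const, Finset.card_univ]
          ring
  have hvpg : vp (starG n) 2 g = Real.sqrt ((1/2) * D) := vp_two_sqrt _ g
  rw [vp_two_sqrt, hvpg]
  calc Real.sqrt ((1/2) * ∑ v : Fin n, ∑ w : Fin n,
        (if (starG n).Adj v w then |mxHL (starG n) g v - mxHL (starG n) g w| ^ (2:ℝ) else 0))
      ≤ Real.sqrt ((2*(n:ℝ))^2 * ((1/2) * D)) := by
        apply Real.sqrt_le_sqrt
        nlinarith [hXM]
    _ = 2 * (n:ℝ) * Real.sqrt ((1/2) * D) := by
        rw [Real.sqrt_mul (by positivity), Real.sqrt_sq (by positivity)]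

end ratio

/-- on the star graph `S_n` (`n ≥ 3`), the explicit function `f` given by
`f a₁ = n`, `f a₂ = 2n - 1`, `f aᵢ = n - 1` otherwise has
`Var₂(M f)/Var₂ f = √((n-1)² + (n-2))/n > (n-1)/n`; hence the analogue of
`C_{S_n,p} = 1 - 1/n` fails for `p = 2`. -/
theorem starGraph_var_two_counterexample (n : ℕ) (hn : 3 ≤ n) (f : Fin n → ℝ)
    (hfdef : f = fun v => if v = ⟨0, by omega⟩ then (n : ℝ) else
        if v = ⟨1, by omega⟩ then 2 * (n : ℝ) - 1 else (n : ℝ) - 1) :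
    vp (starG n) 2 (mxHL (starG n) f) / vp (starG n) 2 f =
      Real.sqrt (((n : ℝ) - 1) ^ 2 + ((n : ℝ) - 2)) / n ∧
    ((n : ℝ) - 1) / n < Real.sqrt (((n : ℝ) - 1) ^ 2 + ((n : ℝ) - 2)) / n ∧
    1 - 1 / (n : ℝ) <
      sSup {c : ℝ | ∃ f' : Fin n → ℝ, 0 < vp (starG n) 2 f' ∧
        c = vp (starG n) 2 (mxHL (starG n) f') / vp (starG n) 2 f'} := by

  classical
  have hN : (3:ℝ) ≤ (n:ℝ) := by exact_mod_cast hn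
  have hNpos : (0:ℝ) < (n:ℝ) := by linarith
  have h0 : f ⟨0, by omega⟩ = (n:ℝ) := by rw [hfdef]; simp
  have h1 : f ⟨1, by omega⟩ = 2*(n:ℝ)-1 := by
    rw [hfdef]
    simp [Fin.ext_iff]
  have hc : ∀ v : Fin n, v.val ≠ 0 → v.val ≠ 1 → f v = (n:ℝ)-1 := by
    intro v hv0 hv1
    rw [hfdef]
    simp [Fin.ext_iff, hv0, hv1]
  set A : ℝ := ((n:ℝ)-1)^2 + ((n:ℝ)-2) with hAdef
  have hApos : 0 < A := by rw [hAdef]; nlinarith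
  have hsA : 0 < Real.sqrt A := Real.sqrt_pos.2 hApos
  have hsq : Real.sqrt A * Real.sqrt A = A := Real.mul_self_sqrt hApos.le
  -- vp of f
  have hvpf : vp (starG n) 2 f = Real.sqrt A := by
    have := vp_star hn f (((n:ℝ)-1)^2) 1
      (by
        rw [h0, h1, rp2, show (n:ℝ) - (2*(n:ℝ)-1) = -((n:ℝ)-1) by ring, abs_neg,
          abs_of_nonneg (by linarith : (0:ℝ) ≤ (n:ℝ)-1)])
      (by
        intro v hv0 hv1
        rw [h0, hc v hv0 hv1, rp2, show (n:ℝ) - ((n:ℝ)-1) = 1 by ring]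
        norm_num)
    rw [this, hAdef]
    norm_num
  -- vp of the maximal function
  have hvpM : vp (starG n) 2 (mxHL (starG n) f) = A / n := by
    have := vp_star hn (mxHL (starG n) f) ((A/(n:ℝ))^2) 0
      (by
        rw [mxHL_center hn f h0 h1 hc, mxHL_one hn f h0 h1 hc, rp2,
          show ((n:ℝ)^2+1)/(n:ℝ) - (2*(n:ℝ)-1) = -(A/(n:ℝ)) by
            rw [hAdef]; field_simp; ring,
          abs_neg, abs_of_nonneg (by positivity : (0:ℝ) ≤ A/(n:ℝ))])
      (by
        intro v hv0 hv1
        rw [mxHL_center hn f h0 h1 hc, mxHL_other hn f h0 h1 hc v hv0 hv1, rp2]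
        simp)
    rw [this]
    rw [show (A/(n:ℝ))^2 + ((n:ℝ)-2)*0 = (A/(n:ℝ))^2 by ring]
    exact Real.sqrt_sq (by positivity)
  have hratio : vp (starG n) 2 (mxHL (starG n) f) / vp (starG n) 2 f = Real.sqrt A / n := by
    rw [hvpM, hvpf, div_eq_div_iff (ne_of_gt hsA) (ne_of_gt hNpos)]
    field_simp
    rw [Real.sq_sqrt hApos.le]
  have hlt : ((n:ℝ) - 1) / n < Real.sqrt A / n := by
    have h2 : (n:ℝ)-1 < Real.sqrt A := by
      rw [show ((n:ℝ)-1) = Real.sqrt (((n:ℝ)-1)^2) from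
        (Real.sqrt_sq (by linarith)).symm]
      apply Real.sqrt_lt_sqrt (by positivity)
      rw [hAdef]; nlinarith
    rw [div_lt_div_iff₀ hNpos hNpos]
    nlinarith
  refine ⟨hratio, hlt, ?_⟩
  have hmem : vp (starG n) 2 (mxHL (starG n) f) / vp (starG n) 2 f ∈
      {c : ℝ | ∃ f' : Fin n → ℝ, 0 < vp (starG n) 2 f' ∧
        c = vp (starG n) 2 (mxHL (starG n) f') / vp (starG n) 2 f'} :=
    ⟨f, by rw [hvpf]; exact hsA, rfl⟩
  have hbdd : BddAbove {c : ℝ | ∃ f' : Fin n → ℝ, 0 < vp (starG n) 2 f' ∧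
      c = vp (starG n) 2 (mxHL (starG n) f') / vp (starG n) 2 f'} := by
    refine ⟨2*(n:ℝ), ?_⟩
    rintro c ⟨g, hg, rfl⟩
    rw [div_le_iff₀ hg]
    exact ratio_bound hn g
  calc 1 - 1/(n:ℝ) = ((n:ℝ)-1)/n := by field_simp
    _ < Real.sqrt A / n := hlt
    _ = vp (starG n) 2 (mxHL (starG n) f) / vp (starG n) 2 f := hratio.symm
    _ ≤ _ := le_csSup hbdd hmem
end
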